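/- Let n ≥ 1, let κ ∈ ℂ with κ ≠ 0, and let (a_{jk}) be a symmetric matrix of complex numbers. Let U be the set of points z ∈ ℂⁿ such that for all j < k the difference z_j − z_k does not lie on the closed nonpositive real axis {w ∈ ℂ : Im w = 0 and Re w ≤ 0}. Define Ψ(z) = ∏_{j<k} (z_j − z_k)^{a_{jk}/κ} using the principal branch of the complex power. Then for every z ∈ U and every index i, the function of the single variable z_i (with the other coordinates fixed) is complex differentiable at z_i, and the abelian Knizhnik–Zamolodchikov equation holds: κ · ∂Ψ/∂z_i (z) = (∑_{j ≠ i} a_{ij}/(z_i − z_j)) · Ψ(z). -/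

import Mathlib

open Complex

/-- The explicit solution `Ψ(z) = ∏_{j<k} (z_j − z_k)^{a_{jk}/κ}` of the abelian
Knizhnik–Zamolodchikov equation, using the principal branch of the complex power. -/
noncomputable def abelianKZSolution (n : ℕ) (κ : ℂ) (a : Fin n → Fin n → ℂ)
    (z : Fin n → ℂ) : ℂ :=
  ∏ p ∈ Finset.univ.filter (fun p : Fin n × Fin n => p.1 < p.2),
    (z p.1 - z p.2) ^ (a p.1 p.2 / κ)

/-- On the region where all differences `z_j − z_k` (for `j < k`) avoid the closed
nonpositive real axis, `Ψ` is complex differentiable in each variable `z_i` and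
satisfies the abelian Knizhnik–Zamolodchikov equation
`κ · ∂Ψ/∂z_i = (∑_{j ≠ i} a_{ij}/(z_i − z_j)) · Ψ`. -/
theorem abelianKZ_equation (n : ℕ) (hn : 1 ≤ n) (κ : ℂ) (hκ : κ ≠ 0)
    (a : Fin n → Fin n → ℂ) (hsym : ∀ j k : Fin n, a j k = a k j)
    (z : Fin n → ℂ)
    (hz : ∀ j k : Fin n, j < k → z j - z k ∈ Complex.slitPlane) (i : Fin n) :
    DifferentiableAt ℂ (fun w => abelianKZSolution n κ a (Function.update z i w)) (z i) ∧
      κ * deriv (fun w => abelianKZSolution n κ a (Function.update z i w)) (z i) =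
        (∑ j ∈ Finset.univ.erase i, a i j / (z i - z j)) * abelianKZSolution n κ a z := by
  classical
  set S : Finset (Fin n × Fin n) :=
    Finset.univ.filter (fun p : Fin n × Fin n => p.1 < p.2) with hS
  set f : Fin n × Fin n → ℂ → ℂ := fun p w =>
    (Function.update z i w p.1 - Function.update z i w p.2) ^ (a p.1 p.2 / κ) with hf
  set e : Fin n × Fin n → ℂ := fun p =>
    (if p.1 = i then (1 : ℂ) else 0) - (if p.2 = i then (1 : ℂ) else 0) with he
  have hne : ∀ p ∈ S, z p.1 - z p.2 ≠ 0 := by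
    intro p hp
    have hlt : p.1 < p.2 := by simpa [hS] using hp
    exact Complex.slitPlane_ne_zero (hz _ _ hlt)
  have hbase : ∀ p : Fin n × Fin n,
      HasDerivAt (fun w => Function.update z i w p.1 - Function.update z i w p.2)
        (e p) (z i) := by
    intro p
    have h1 : HasDerivAt (fun w : ℂ => Function.update z i w p.1)
        (if p.1 = i then (1 : ℂ) else 0) (z i) := by
      by_cases h : p.1 = i <;>
        simp only [Function.update_apply, h, if_true, if_false] <;>
        [exact hasDerivAt_id _; exact hasDerivAt_const _ _]
    have h2 : HasDerivAt (fun w : ℂ => Function.update z i w p.2)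
        (if p.2 = i then (1 : ℂ) else 0) (z i) := by
      by_cases h : p.2 = i <;>
        simp only [Function.update_apply, h, if_true, if_false] <;>
        [exact hasDerivAt_id _; exact hasDerivAt_const _ _]
    exact h1.sub h2
  have hfd : ∀ p ∈ S, HasDerivAt (f p)
      (a p.1 p.2 / κ * (z p.1 - z p.2) ^ (a p.1 p.2 / κ - 1) * e p) (z i) := by
    intro p hp
    have hlt : p.1 < p.2 := by simpa [hS] using hp
    have h0 : (fun w => Function.update z i w p.1 - Function.update z i w p.2) (z i)
        ∈ Complex.slitPlane := by
      simpa [Function.update_eq_self] using hz _ _ hlt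
    have := (hbase p).cpow_const (c := a p.1 p.2 / κ) h0
    simpa [Function.update_eq_self] using this
  have hD : HasDerivAt (fun w => abelianKZSolution n κ a (Function.update z i w))
      (∑ p ∈ S, (∏ q ∈ S.erase p, f q (z i)) •
        (a p.1 p.2 / κ * (z p.1 - z p.2) ^ (a p.1 p.2 / κ - 1) * e p)) (z i) := by
    exact HasDerivAt.fun_finsetProd hfd
  refine ⟨hD.differentiableAt, ?_⟩
  rw [hD.deriv]
  have hfz : ∀ p : Fin n × Fin n, f p (z i) = (z p.1 - z p.2) ^ (a p.1 p.2 / κ) := by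
    intro p; simp [hf, Function.update_eq_self]
  have hΨ : abelianKZSolution n κ a z = ∏ p ∈ S, f p (z i) := by
    simp [abelianKZSolution, hS, hfz]
  -- compute each term
  have hterm : ∀ p ∈ S, κ * ((∏ q ∈ S.erase p, f q (z i)) •
      (a p.1 p.2 / κ * (z p.1 - z p.2) ^ (a p.1 p.2 / κ - 1) * e p)) =
      a p.1 p.2 * e p / (z p.1 - z p.2) * abelianKZSolution n κ a z := by
    intro p hp
    have hx : z p.1 - z p.2 ≠ 0 := hne p hp
    have hxc : (z p.1 - z p.2) ^ (a p.1 p.2 / κ) ≠ 0 := by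
      simp [Complex.cpow_eq_zero_iff, hx]
    have hsub : (z p.1 - z p.2) ^ (a p.1 p.2 / κ - 1) =
        (z p.1 - z p.2) ^ (a p.1 p.2 / κ) / (z p.1 - z p.2) := by
      rw [Complex.cpow_sub _ _ hx, Complex.cpow_one]
    rw [hΨ, ← Finset.prod_erase_mul S _ hp, hfz, hsub]
    rw [smul_eq_mul]
    have hκ' : κ * κ⁻¹ = 1 := mul_inv_cancel₀ hκ
    linear_combination (a p.1 p.2 * (∏ q ∈ S.erase p, f q (z i)) * (z p.1 - z p.2) ^ (a p.1 p.2 / κ) * (z p.1 - z p.2)⁻¹ * e p) * hκ'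
  rw [Finset.mul_sum, Finset.sum_congr rfl hterm, ← Finset.sum_mul]
  congr 1
  -- now the combinatorial identity
  have hzero : ∀ p ∈ S, p ∉ S.filter (fun p => p.1 = i ∨ p.2 = i) →
      a p.1 p.2 * e p / (z p.1 - z p.2) = 0 := by
    intro p hp hp'
    have : ¬(p.1 = i ∨ p.2 = i) := by
      intro h; exact hp' (Finset.mem_filter.mpr ⟨hp, h⟩)
    push_neg at this
    simp [he, this.1, this.2]
  rw [← Finset.sum_subset (Finset.filter_subset _ _) hzero]
  refine Finset.sum_nbij' (fun p => if p.1 = i then p.2 else p.1)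
    (fun j => if i < j then (i, j) else (j, i)) ?_ ?_ ?_ ?_ ?_
  · rintro ⟨p1, p2⟩ hp
    obtain ⟨hpS, hor⟩ := Finset.mem_filter.mp hp
    have hlt : p1 < p2 := by simpa [hS] using hpS
    rcases hor with h | h
    · have h' : p1 = i := h
      subst h'
      simp only [if_true]
      exact Finset.mem_erase.mpr ⟨hlt.ne', Finset.mem_univ _⟩
    · have h' : p2 = i := h
      have h1 : p1 ≠ i := by rintro rfl; exact absurd (h' ▸ hlt) (lt_irrefl _)
      simp only [h1, if_false]
      exact Finset.mem_erase.mpr ⟨h1, Finset.mem_univ _⟩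
  · intro j hj
    have hji : j ≠ i := (Finset.mem_erase.mp hj).1
    by_cases h : i < j
    · simp only [h, if_true]
      refine Finset.mem_filter.mpr ⟨?_, Or.inl rfl⟩
      simp [hS, h]
    · have hlt : j < i := lt_of_le_of_ne (not_lt.mp h) hji
      simp only [h, if_false]
      refine Finset.mem_filter.mpr ⟨?_, Or.inr rfl⟩
      simp [hS, hlt]
  · rintro ⟨p1, p2⟩ hp
    obtain ⟨hpS, hor⟩ := Finset.mem_filter.mp hp
    have hlt : p1 < p2 := by simpa [hS] using hpS
    by_cases h1 : p1 = i
    · have h2 : i < p2 := h1 ▸ hlt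
      simp [h1, h2]
    · have h2 : p2 = i := by tauto
      have h3 : ¬ i < p1 := by rw [← h2]; exact not_lt.mpr hlt.le
      simp [h1, h3, h2]
  · intro j hj
    have hji : j ≠ i := (Finset.mem_erase.mp hj).1
    by_cases h : i < j
    · simp [h]
    · have hlt : j < i := lt_of_le_of_ne (not_lt.mp h) hji
      simp [h, hji]
  · rintro ⟨p1, p2⟩ hp
    obtain ⟨hpS, hor⟩ := Finset.mem_filter.mp hp
    have hlt : p1 < p2 := by simpa [hS] using hpS
    by_cases h1 : p1 = i
    · have h2 : p2 ≠ i := by rw [← h1]; exact hlt.ne'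
      simp [he, h1, h2]
    · have h2 : p2 = i := by tauto
      simp only [he, h1, if_false, h2, if_true]
      rw [hsym i p1, show z p1 - z i = -(z i - z p1) by ring, div_neg]
      ring
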